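/- Let a be a Hermitian operator on H^(1)⊗…⊗H^(k) satisfying condition (★): for every pure product state p with Tr(a p) = 0, the separable tangent space C(p) is contained in I_a = {x Hermitian : Tr(x†a) = 0}. Suppose |e₁^(1)⟩, |e₂^(1)⟩ ∈ H^(1) are linearly independent unit vectors and |f⟩ ∈ H^(2)⊗…⊗H^(k) is a unit product vector such that the projectors onto |e₁^(1)⟩⊗|f⟩ and |e₂^(1)⟩⊗|f⟩ both lie in I_a. Then for every nonzero |g⟩ = α₁|e₁^(1)⟩ + α₂|e₂^(1)⟩ (α₁, α₂ ∈ ℂ), the projector onto the normalization of |g⟩⊗|f⟩ also lies in I_a. -/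

import Mathlib

open Matrix
open scoped ComplexOrder

namespace EWitness

/-- Operators on the tensor product `H⁽¹⁾ ⊗ ⋯ ⊗ H⁽ᵏ⁾` of finite-dimensional complex
Hilbert spaces (with `dim H⁽ⁱ⁾ = n i`), modeled as matrices indexed by tuples. -/
abbrev Op {k : ℕ} (n : Fin k → ℕ) := Matrix (∀ i, Fin (n i)) (∀ i, Fin (n i)) ℂ

/-- Tensor (Kronecker) product of one operator per tensor factor. -/
def tensorOp {k : ℕ} (n : Fin k → ℕ) (A : ∀ i, Matrix (Fin (n i)) (Fin (n i)) ℂ) : Op n :=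
  Matrix.of fun x y => ∏ i, A i (x i) (y i)

/-- Tensor product of one vector per tensor factor. -/
def tensorVec {k : ℕ} (n : Fin k → ℕ) (v : ∀ i, Fin (n i) → ℂ) : (∀ i, Fin (n i)) → ℂ :=
  fun x => ∏ i, v i (x i)

/-- The rank one projector `|v⟩⟨v|`. -/
def proj {m : Type*} (v : m → ℂ) : Matrix m m ℂ := Matrix.vecMulVec v (star v)

/-- The trace inner product `(a,b) = Tr(a† b)` (its real part; on the real vector space of
Hermitian operators this is exactly the trace inner product, which is real-valued there). -/
noncomputable def tinner {m : Type*} [Fintype m] (a b : Matrix m m ℂ) : ℝ :=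
  ((aᴴ * b).trace).re

/-- A state: a positive semidefinite trace-one operator. -/
noncomputable def IsState {m : Type*} [Fintype m] (ρ : Matrix m m ℂ) : Prop :=
  ρ.PosSemidef ∧ ρ.trace = 1

/-- A pure product state `⊗ᵢ |e⁽ⁱ⁾⟩⟨e⁽ⁱ⁾|` with the `e⁽ⁱ⁾` unit vectors. -/
def IsPureProduct {k : ℕ} (n : Fin k → ℕ) (p : Op n) : Prop :=
  ∃ e : ∀ i, Fin (n i) → ℂ,
    (∀ i, star (e i) ⬝ᵥ e i = 1) ∧ p = tensorOp n fun i => proj (e i)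

/-- A separable state: a finite convex combination of tensor products of states. -/
noncomputable def IsSeparable {k : ℕ} (n : Fin k → ℕ) (ϱ : Op n) : Prop :=
  ∃ (N : ℕ) (w : Fin N → ℝ) (ρ : Fin N → ∀ i, Matrix (Fin (n i)) (Fin (n i)) ℂ),
    (∀ j, 0 ≤ w j) ∧ ((∑ j, w j) = 1) ∧ (∀ j i, IsState (ρ j i)) ∧
    ϱ = ∑ j, (w j : ℂ) • tensorOp n (ρ j)

/-- The generating set of `τ⁽ⁱ⁾`: operators `I ⊗ ⋯ ⊗ h⁽ⁱ⁾ ⊗ ⋯ ⊗ I`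
with `h⁽ⁱ⁾` Hermitian and traceless. -/
def tauGen {k : ℕ} (n : Fin k → ℕ) (i : Fin k) : Set (Op n) :=
  {T | ∃ h : Matrix (Fin (n i)) (Fin (n i)) ℂ, h.IsHermitian ∧ h.trace = 0 ∧
      T = tensorOp n (Function.update (fun j => (1 : Matrix (Fin (n j)) (Fin (n j)) ℂ)) i h)}

/-- `τ⁽ⁱ⁾`: the real span of operators `I ⊗ ⋯ ⊗ h⁽ⁱ⁾ ⊗ ⋯ ⊗ I`. -/
noncomputable def tauComp {k : ℕ} (n : Fin k → ℕ) (i : Fin k) : Submodule ℝ (Op n) :=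
  Submodule.span ℝ (tauGen n i)

/-- `τ = span(⋃ᵢ τ⁽ⁱ⁾)`. -/
noncomputable def tau {k : ℕ} (n : Fin k → ℕ) : Submodule ℝ (Op n) :=
  Submodule.span ℝ (⋃ i, tauGen n i)

/-- The separable tangent space `C(p) = {i[p,t] : t ∈ τ}`. -/
def sepTangent {k : ℕ} (n : Fin k → ℕ) (p : Op n) : Set (Op n) :=
  {x | ∃ t ∈ tau n, x = Complex.I • (p * t - t * p)}

/-- Condition (★): for every pure product state `p` orthogonal to `a`, the separable tangent
space `C(p)` is contained in the hyperplane `I_a = {x : (x,a) = 0}`. -/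
def StarCond {k : ℕ} (n : Fin k → ℕ) (a : Op n) : Prop :=
  ∀ p : Op n, IsPureProduct n p → tinner a p = 0 →
    sepTangent n p ⊆ {x : Op n | tinner x a = 0}

/-- An operator is supported on a subspace `W` if it vanishes on the orthogonal
complement of `W` and its range is contained in `W`. -/
def SupportedOn {m : Type*} [Fintype m] (W : Submodule ℂ (m → ℂ)) (M : Matrix m m ℂ) : Prop :=
  (∀ v, M.mulVec v ∈ W) ∧ (∀ v, (∀ w ∈ W, star w ⬝ᵥ v = 0) → M.mulVec v = 0)



section Toolbox

variable {k : ℕ} {n : Fin k → ℕ}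

lemma vecMulVec_mulVec' {m : Type*} [Fintype m] (v w x : m → ℂ) :
    (vecMulVec v w) *ᵥ x = (w ⬝ᵥ x) • v := by
  funext i
  simp [mulVec, dotProduct, vecMulVec_apply, Finset.mul_sum, mul_comm, mul_left_comm]

lemma trace_vecMulVec_mul {m : Type*} [Fintype m] (v w : m → ℂ) (a : Matrix m m ℂ) :
    ((vecMulVec v w) * a).trace = w ⬝ᵥ (a *ᵥ v) := by
  simp only [trace, diag, mul_apply, vecMulVec_apply, dotProduct, mulVec]
  rw [Finset.sum_comm]
  exact Finset.sum_congr rfl fun y _ => by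
    rw [Finset.mul_sum]; exact Finset.sum_congr rfl fun x _ => by ring

lemma trace_vecMulVec' {m : Type*} [Fintype m] (v w : m → ℂ) :
    (vecMulVec v w).trace = w ⬝ᵥ v := by
  simp [trace, diag, vecMulVec_apply, dotProduct, mul_comm]

lemma conjTranspose_vecMulVec' {m : Type*} (v w : m → ℂ) :
    (vecMulVec v w)ᴴ = vecMulVec (star w) (star v) := by
  ext i j; simp [conjTranspose_apply, vecMulVec_apply, mul_comm]

lemma proj_isHermitian {m : Type*} (v : m → ℂ) : (proj v).IsHermitian := by
  unfold proj Matrix.IsHermitian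
  rw [conjTranspose_vecMulVec']; simp

lemma trace_proj_mul {m : Type*} [Fintype m] (v : m → ℂ) (a : Matrix m m ℂ) :
    (proj v * a).trace = star v ⬝ᵥ (a *ᵥ v) := trace_vecMulVec_mul v (star v) a

lemma tinner_proj {m : Type*} [Fintype m] (v : m → ℂ) (a : Matrix m m ℂ) :
    tinner (proj v) a = (star v ⬝ᵥ (a *ᵥ v)).re := by
  unfold tinner
  rw [(proj_isHermitian v).eq, trace_proj_mul]

lemma tinner_comm {m : Type*} [Fintype m] (a b : Matrix m m ℂ) : tinner a b = tinner b a := by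
  unfold tinner
  have : (bᴴ * a).trace = star ((aᴴ * b).trace) := by
    rw [← Matrix.trace_conjTranspose, Matrix.conjTranspose_mul,
      Matrix.conjTranspose_conjTranspose]
  rw [this]
  simp [Complex.star_def]

lemma herm_sesq {m : Type*} [Fintype m] {a : Matrix m m ℂ} (ha : a.IsHermitian)
    (v w : m → ℂ) : star (star v ⬝ᵥ a *ᵥ w) = star w ⬝ᵥ a *ᵥ v := by
  rw [star_dotProduct, star_star, star_mulVec, ha.eq, ← dotProduct_mulVec]

lemma tensorOp_conjTranspose (A : ∀ i, Matrix (Fin (n i)) (Fin (n i)) ℂ) :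
    (tensorOp n A)ᴴ = tensorOp n fun i => (A i)ᴴ := by
  ext x y
  simp [tensorOp, conjTranspose_apply, map_prod]

lemma tensorOp_mulVec (A : ∀ i, Matrix (Fin (n i)) (Fin (n i)) ℂ)
    (v : ∀ i, Fin (n i) → ℂ) :
    (tensorOp n A) *ᵥ (tensorVec n v) = tensorVec n fun i => (A i) *ᵥ (v i) := by
  funext x
  simp only [mulVec, dotProduct, tensorOp, tensorVec, of_apply]
  rw [Finset.prod_univ_sum fun _ => Finset.univ]
  rw [Fintype.piFinset_univ]
  exact Finset.sum_congr rfl fun y _ => (Finset.prod_mul_distrib).symm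

lemma tensorOp_proj (v : ∀ i, Fin (n i) → ℂ) :
    tensorOp n (fun i => proj (v i)) = proj (tensorVec n v) := by
  ext x y
  simp [tensorOp, proj, vecMulVec_apply, tensorVec, Finset.prod_mul_distrib, map_prod]

lemma tensorVec_update_apply (u : ∀ i, Fin (n i) → ℂ) (i₀ : Fin k) (g : Fin (n i₀) → ℂ)
    (x : ∀ i, Fin (n i)) :
    tensorVec n (Function.update u i₀ g) x
      = g (x i₀) * ∏ i ∈ Finset.univ \ {i₀}, u i (x i) := by
  unfold tensorVec
  rw [show (fun i => (Function.update u i₀ g) i (x i)) =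
      Function.update (fun i => u i (x i)) i₀ (g (x i₀)) by
    funext i
    rcases eq_or_ne i i₀ with rfl | hne
    · simp
    · simp [Function.update_of_ne hne]]
  exact Finset.prod_update_of_mem (Finset.mem_univ i₀) _ _

lemma tensorOp_update_apply (A : ∀ i, Matrix (Fin (n i)) (Fin (n i)) ℂ) (i₀ : Fin k)
    (M : Matrix (Fin (n i₀)) (Fin (n i₀)) ℂ) (x y : ∀ i, Fin (n i)) :
    tensorOp n (Function.update A i₀ M) x y
      = M (x i₀) (y i₀) * ∏ i ∈ Finset.univ \ {i₀}, A i (x i) (y i) := by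
  show (∏ i, (Function.update A i₀ M) i (x i) (y i)) = _
  rw [show (fun i => (Function.update A i₀ M) i (x i) (y i)) =
      Function.update (fun i => A i (x i) (y i)) i₀ (M (x i₀) (y i₀)) by
    funext i
    rcases eq_or_ne i i₀ with rfl | hne
    · simp
    · simp [Function.update_of_ne hne]]
  exact Finset.prod_update_of_mem (Finset.mem_univ i₀) _ _

lemma tensorVec_update_add (u : ∀ i, Fin (n i) → ℂ) (i₀ : Fin k) (g g' : Fin (n i₀) → ℂ) :
    tensorVec n (Function.update u i₀ (g + g'))
      = tensorVec n (Function.update u i₀ g) + tensorVec n (Function.update u i₀ g') := by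
  funext x; simp [tensorVec_update_apply, add_mul]

lemma tensorVec_update_smul (u : ∀ i, Fin (n i) → ℂ) (i₀ : Fin k) (c : ℂ)
    (g : Fin (n i₀) → ℂ) :
    tensorVec n (Function.update u i₀ (c • g)) = c • tensorVec n (Function.update u i₀ g) := by
  funext x; simp [tensorVec_update_apply]; ring

lemma tensorOp_update_smul (A : ∀ i, Matrix (Fin (n i)) (Fin (n i)) ℂ) (i₀ : Fin k) (c : ℂ)
    (M : Matrix (Fin (n i₀)) (Fin (n i₀)) ℂ) :
    tensorOp n (Function.update A i₀ (c • M)) = c • tensorOp n (Function.update A i₀ M) := by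
  ext x y; simp [tensorOp_update_apply]; ring

lemma update_proj_comm (u : ∀ i, Fin (n i) → ℂ) (i₀ : Fin k) (g : Fin (n i₀) → ℂ) :
    Function.update (fun i => proj (u i)) i₀ (proj g)
      = fun i => proj (Function.update u i₀ g i) := by
  funext i
  rcases eq_or_ne i i₀ with rfl | hne
  · simp
  · simp [Function.update_of_ne hne]

lemma tinner_tensor_proj [NeZero k] (a : Op n) (u : ∀ i, Fin (n i) → ℂ)
    (g : Fin (n 0) → ℂ) :
    tinner (tensorOp n (Function.update (fun i => proj (u i)) 0 (proj g))) a
      = (star (tensorVec n (Function.update u 0 g)) ⬝ᵥ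
          (a *ᵥ tensorVec n (Function.update u 0 g))).re := by
  rw [update_proj_comm, tensorOp_proj, tinner_proj]

/-- The key consequence of condition (★): tangent directions at the pure product state
`|e⊗f⟩⟨e⊗f|` generated by a Hermitian traceless `h` on the first factor are orthogonal
to `a`, which gives the vanishing of an imaginary part. -/
lemma star_consequence [NeZero k] (a : Op n) (ha : a.IsHermitian) (hstar : StarCond n a)
    (e : Fin (n 0) → ℂ) (he : star e ⬝ᵥ e = 1)
    (u : ∀ i, Fin (n i) → ℂ) (hu : ∀ i, i ≠ 0 → star (u i) ⬝ᵥ u i = 1)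
    (hz : tinner (tensorOp n (Function.update (fun i => proj (u i)) 0 (proj e))) a = 0)
    (h : Matrix (Fin (n 0)) (Fin (n 0)) ℂ) (hh : h.IsHermitian) (htr : h.trace = 0) :
    (star (tensorVec n (Function.update u 0 e)) ⬝ᵥ
      a *ᵥ tensorVec n (Function.update u 0 (h *ᵥ e))).im = 0 := by
  set V : (∀ i, Fin (n i)) → ℂ := tensorVec n (Function.update u 0 e) with hV
  set p : Op n := proj V with hp
  set t : Op n :=
    tensorOp n (Function.update (fun j => (1 : Matrix (Fin (n j)) (Fin (n j)) ℂ)) 0 h) with ht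
  have hpure : IsPureProduct n p := by
    refine ⟨Function.update u 0 e, fun i => ?_, by rw [hp, hV, tensorOp_proj]⟩
    rcases eq_or_ne i 0 with rfl | hne
    · simpa using he
    · simpa [Function.update_of_ne hne] using hu i hne
  have hz' : tinner p a = 0 := by
    rw [hp, hV, ← tensorOp_proj, ← update_proj_comm]
    exact hz
  have horth : tinner a p = 0 := by rw [tinner_comm]; exact hz'
  have hth : tᴴ = t := by
    rw [ht, tensorOp_conjTranspose]
    have hfun : (fun i => ((Function.update
        (fun j => (1 : Matrix (Fin (n j)) (Fin (n j)) ℂ)) 0 h) i)ᴴ)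
        = Function.update (fun j => (1 : Matrix (Fin (n j)) (Fin (n j)) ℂ)) 0 h := by
      funext i
      rcases eq_or_ne i 0 with rfl | hne
      · simp [hh.eq]
      · simp [Function.update_of_ne hne]
    rw [hfun]
  have htmem : t ∈ tau n := Submodule.subset_span (Set.mem_iUnion.2 ⟨0, h, hh, htr, ht⟩)
  have key : tinner (Complex.I • (p * t - t * p)) a = 0 :=
    hstar p hpure horth ⟨t, htmem, rfl⟩
  have hW : t *ᵥ V = tensorVec n (Function.update u 0 (h *ᵥ e)) := by
    rw [ht, hV, tensorOp_mulVec]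
    have hfun : (fun i => ((Function.update
        (fun j => (1 : Matrix (Fin (n j)) (Fin (n j)) ℂ)) 0 h) i) *ᵥ
          (Function.update u 0 e i)) = Function.update u 0 (h *ᵥ e) := by
      funext i
      rcases eq_or_ne i 0 with rfl | hne
      · simp
      · simp [Function.update_of_ne hne]
    rw [hfun]
  have e1 : (Complex.I • (p * t - t * p))ᴴ = (-Complex.I) • (t * p - p * t) := by
    rw [Matrix.conjTranspose_smul, Matrix.conjTranspose_sub, Matrix.conjTranspose_mul,
      Matrix.conjTranspose_mul, hth, hp, (proj_isHermitian V).eq, ← hp]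
    simp [Complex.star_def, Complex.conj_I]
  have tr1 : (t * p * a).trace = star V ⬝ᵥ a *ᵥ (t *ᵥ V) := by
    rw [mul_assoc, trace_mul_comm, mul_assoc, hp, trace_proj_mul, ← mulVec_mulVec]
  have tr2 : (p * t * a).trace = star (star V ⬝ᵥ a *ᵥ (t *ᵥ V)) := by
    rw [mul_assoc, hp, trace_proj_mul, ← mulVec_mulVec, dotProduct_mulVec,
      herm_sesq ha, star_mulVec, hth]
  have e3 : tinner (Complex.I • (p * t - t * p)) a
      = 2 * (star V ⬝ᵥ a *ᵥ (t *ᵥ V)).im := by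
    unfold tinner
    rw [e1, Matrix.smul_mul, Matrix.sub_mul, trace_smul, trace_sub, tr1, tr2, smul_eq_mul]
    simp [Complex.mul_re, Complex.sub_re, Complex.sub_im, Complex.star_def,
      Complex.conj_re, Complex.conj_im]
    ring
  rw [e3, hW] at key
  linarith

end Toolbox

/-- Suppose the Hermitian operator `a` satisfies condition (★).  If
`|e₁⟩, |e₂⟩ ∈ H⁽¹⁾` are linearly independent unit vectors and `|f⟩ = ⊗ᵢ |u i⟩` is a unit
product vector in the remaining factors such that the projectors onto `|e₁⟩⊗|f⟩` and
`|e₂⟩⊗|f⟩` lie in `I_a`, then for every nonzero `|g⟩ = α₁|e₁⟩ + α₂|e₂⟩`, the projector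
onto the normalization of `|g⟩⊗|f⟩` also lies in `I_a`. -/
theorem line_of_product_projections_in_hyperplane {k : ℕ} [NeZero k] (n : Fin k → ℕ)
    (a : Op n) (ha : a.IsHermitian) (hstar : StarCond n a)
    (e₁ e₂ : Fin (n 0) → ℂ) (he₁ : star e₁ ⬝ᵥ e₁ = 1) (he₂ : star e₂ ⬝ᵥ e₂ = 1)
    (hli : LinearIndependent ℂ ![e₁, e₂])
    (u : ∀ i, Fin (n i) → ℂ) (hu : ∀ i, i ≠ 0 → star (u i) ⬝ᵥ u i = 1)
    (hz₁ : tinner (tensorOp n (Function.update (fun i => proj (u i)) 0 (proj e₁))) a = 0)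
    (hz₂ : tinner (tensorOp n (Function.update (fun i => proj (u i)) 0 (proj e₂))) a = 0) :
    ∀ α₁ α₂ : ℂ, α₁ • e₁ + α₂ • e₂ ≠ 0 →
      tinner (tensorOp n (Function.update (fun i => proj (u i)) 0
        ((star (α₁ • e₁ + α₂ • e₂) ⬝ᵥ (α₁ • e₁ + α₂ • e₂))⁻¹ •
          proj (α₁ • e₁ + α₂ • e₂)))) a = 0 := by
  intro α₁ α₂ _hg
  -- the first factor is nontrivial
  have hn : n 0 ≠ 0 := by
    intro h0
    haveI : IsEmpty (Fin (n 0)) := ⟨fun x => absurd x.isLt (by omega)⟩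
    simp [dotProduct] at he₁
  have hnC : ((n 0 : ℕ) : ℂ) ≠ 0 := Nat.cast_ne_zero.2 hn
  -- vanishing of the diagonal matrix elements
  have hB11 : star (tensorVec n (Function.update u 0 e₁)) ⬝ᵥ
      a *ᵥ tensorVec n (Function.update u 0 e₁) = 0 := by
    have hre := hz₁
    rw [tinner_tensor_proj] at hre
    have hsym := herm_sesq ha (tensorVec n (Function.update u 0 e₁))
      (tensorVec n (Function.update u 0 e₁))
    apply Complex.ext
    · exact hre
    · have h2 := congrArg Complex.im hsym
      simp only [Complex.star_def, Complex.conj_im] at h2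
      simp only [Complex.zero_im]
      linarith
  have hB22 : star (tensorVec n (Function.update u 0 e₂)) ⬝ᵥ
      a *ᵥ tensorVec n (Function.update u 0 e₂) = 0 := by
    have hre := hz₂
    rw [tinner_tensor_proj] at hre
    have hsym := herm_sesq ha (tensorVec n (Function.update u 0 e₂))
      (tensorVec n (Function.update u 0 e₂))
    apply Complex.ext
    · exact hre
    · have h2 := congrArg Complex.im hsym
      simp only [Complex.star_def, Complex.conj_im] at h2
      simp only [Complex.zero_im]
      linarith
  -- first tangent direction: the "real part" Hermitian perturbation
  set c₁ : ℂ := (star e₁ ⬝ᵥ e₂ + star (star e₁ ⬝ᵥ e₂)) / ((n 0 : ℕ) : ℂ) with hc₁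
  set h₁ : Matrix (Fin (n 0)) (Fin (n 0)) ℂ :=
    vecMulVec e₂ (star e₁) + vecMulVec e₁ (star e₂) - c₁ • 1 with hh₁def
  have hstarc₁ : star c₁ = c₁ := by
    rw [hc₁, star_div₀, star_add, star_star, star_natCast]; ring
  have hh₁ : h₁.IsHermitian := by
    show h₁ᴴ = h₁
    rw [hh₁def, Matrix.conjTranspose_sub, Matrix.conjTranspose_add, conjTranspose_vecMulVec',
      conjTranspose_vecMulVec', Matrix.conjTranspose_smul, Matrix.conjTranspose_one,
      star_star, star_star, hstarc₁, add_comm (vecMulVec e₁ (star e₂))]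
  have htr₁ : h₁.trace = 0 := by
    rw [hh₁def, trace_sub, trace_add, trace_vecMulVec', trace_vecMulVec', trace_smul,
      trace_one, Fintype.card_fin, smul_eq_mul, hc₁, ← star_dotProduct e₂ e₁]
    field_simp
    ring
  have hmv₁ : h₁ *ᵥ e₁ = e₂ + (star (star e₁ ⬝ᵥ e₂) - c₁) • e₁ := by
    rw [hh₁def, Matrix.sub_mulVec, Matrix.add_mulVec, vecMulVec_mulVec', vecMulVec_mulVec',
      he₁, smul_mulVec, Matrix.one_mulVec, one_smul, star_dotProduct e₂ e₁]
    funext j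
    simp [smul_eq_mul]
    ring
  have him12 : (star (tensorVec n (Function.update u 0 e₁)) ⬝ᵥ
      a *ᵥ tensorVec n (Function.update u 0 e₂)).im = 0 := by
    have hc := star_consequence a ha hstar e₁ he₁ u hu hz₁ h₁ hh₁ htr₁
    rw [hmv₁, tensorVec_update_add, tensorVec_update_smul, mulVec_add, mulVec_smul,
      dotProduct_add, dotProduct_smul, hB11, smul_zero, add_zero] at hc
    exact hc
  -- second tangent direction: the "imaginary part" Hermitian perturbation
  set c₂ : ℂ := (Complex.I * (star e₁ ⬝ᵥ e₂) - Complex.I * star (star e₁ ⬝ᵥ e₂)) /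
      ((n 0 : ℕ) : ℂ) with hc₂
  set h₂ : Matrix (Fin (n 0)) (Fin (n 0)) ℂ :=
    Complex.I • vecMulVec e₂ (star e₁) - Complex.I • vecMulVec e₁ (star e₂) - c₂ • 1 with hh₂def
  have hstarc₂ : star c₂ = c₂ := by
    rw [hc₂, star_div₀, star_sub, star_mul', star_mul', star_star, star_natCast,
      Complex.star_def, Complex.conj_I]
    ring
  have hh₂ : h₂.IsHermitian := by
    show h₂ᴴ = h₂
    rw [hh₂def, Matrix.conjTranspose_sub, Matrix.conjTranspose_sub,
      Matrix.conjTranspose_smul, Matrix.conjTranspose_smul, Matrix.conjTranspose_smul,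
      conjTranspose_vecMulVec', conjTranspose_vecMulVec', Matrix.conjTranspose_one,
      star_star, star_star, hstarc₂, Complex.star_def, Complex.conj_I, neg_smul, neg_smul]
    abel
  have htr₂ : h₂.trace = 0 := by
    rw [hh₂def, trace_sub, trace_sub, trace_smul, trace_smul, trace_smul,
      trace_vecMulVec', trace_vecMulVec', trace_one, Fintype.card_fin, smul_eq_mul,
      smul_eq_mul, smul_eq_mul, hc₂, ← star_dotProduct e₂ e₁]
    field_simp
    ring
  have hmv₂ : h₂ *ᵥ e₁ = Complex.I • e₂ +
      (-(Complex.I * star (star e₁ ⬝ᵥ e₂)) - c₂) • e₁ := by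
    rw [hh₂def, Matrix.sub_mulVec, Matrix.sub_mulVec, smul_mulVec, smul_mulVec,
      smul_mulVec, vecMulVec_mulVec', vecMulVec_mulVec', he₁, one_smul,
      Matrix.one_mulVec, star_dotProduct e₂ e₁]
    funext j
    simp [smul_eq_mul]
    ring
  have hre12 : (star (tensorVec n (Function.update u 0 e₁)) ⬝ᵥ
      a *ᵥ tensorVec n (Function.update u 0 e₂)).re = 0 := by
    have hc := star_consequence a ha hstar e₁ he₁ u hu hz₁ h₂ hh₂ htr₂
    rw [hmv₂, tensorVec_update_add, tensorVec_update_smul, tensorVec_update_smul, mulVec_add,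
      mulVec_smul, mulVec_smul, dotProduct_add, dotProduct_smul, dotProduct_smul,
      hB11, smul_zero, add_zero] at hc
    simpa [smul_eq_mul, Complex.mul_im] using hc
  have hB12 : star (tensorVec n (Function.update u 0 e₁)) ⬝ᵥ
      a *ᵥ tensorVec n (Function.update u 0 e₂) = 0 := Complex.ext hre12 him12
  have hB21 : star (tensorVec n (Function.update u 0 e₂)) ⬝ᵥ
      a *ᵥ tensorVec n (Function.update u 0 e₁) = 0 := by
    have hsym := herm_sesq ha (tensorVec n (Function.update u 0 e₁))
      (tensorVec n (Function.update u 0 e₂))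
    rw [hB12, star_zero] at hsym
    exact hsym.symm
  -- the matrix element at `g = α₁ e₁ + α₂ e₂` vanishes
  have hBg : star (tensorVec n (Function.update u 0 (α₁ • e₁ + α₂ • e₂))) ⬝ᵥ
      a *ᵥ tensorVec n (Function.update u 0 (α₁ • e₁ + α₂ • e₂)) = 0 := by
    simp only [tensorVec_update_add, tensorVec_update_smul, star_add, star_smul,
      mulVec_add, mulVec_smul, add_dotProduct, smul_dotProduct, dotProduct_add,
      dotProduct_smul, hB11, hB12, hB21, hB22, smul_zero, add_zero, zero_add]
  -- conclude
  rw [tensorOp_update_smul]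
  unfold tinner
  rw [Matrix.conjTranspose_smul, Matrix.smul_mul, trace_smul, update_proj_comm,
    tensorOp_proj, (proj_isHermitian _).eq, trace_proj_mul, hBg]
  simp

end EWitness
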